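/- Let t ≥ 2 and n ≥ 3 be integers with t^n ≡ t (mod n) and (t, n) ≠ (2, 3). Then the quadruple (t, n, (t^n − t)/n, 1) is a prefix polymorphism. Moreover, (2, 3, 2, 1) is not a prefix polymorphism. -/
import Mathlib


/-- A quadruple `(x, n, B, k)` of positive integers with `B ≥ 2` is a *prefix
polymorphism* if `x^n = B^k·n + x` and `B^(k-1) ≤ x < B^k` (i.e. `x` has exactly
`k` digits in base `B`). -/
def IsPrefixPolymorphism (x n B k : ℕ) : Prop :=
  0 < x ∧ 0 < n ∧ 2 ≤ B ∧ 0 < k ∧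
    x ^ n = B ^ k * n + x ∧ B ^ (k - 1) ≤ x ∧ x < B ^ k

lemma aux_two_pow : ∀ n : ℕ, 4 ≤ n → n + 1 < 2 ^ (n - 1) := by
  intro n hn
  induction n with
  | zero => omega
  | succ m ih =>
    rcases Nat.lt_or_ge m 4 with h | h
    · interval_cases m <;> first | omega | norm_num
    · have := ih (by omega)
      have h1 : m + 1 - 1 = (m - 1) + 1 := by omega
      rw [h1, pow_succ]
      omega

lemma aux_ineq (t n : ℕ) (ht : 2 ≤ t) (hn : 3 ≤ n) (hne : ¬(t = 2 ∧ n = 3)) :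
    t * (n + 1) < t ^ n := by
  rcases Nat.lt_or_ge n 4 with h | h
  · have hn3 : n = 3 := by omega
    have ht3 : 3 ≤ t := by omega
    subst hn3
    calc t * (3 + 1) < t * t * t := by nlinarith
    _ = t ^ 3 := by ring
  · have h1 : n + 1 < 2 ^ (n - 1) := aux_two_pow n h
    calc t * (n + 1) < t * 2 ^ (n - 1) := by
          exact mul_lt_mul_of_pos_left h1 (by omega : 0 < t)
      _ ≤ t * t ^ (n - 1) := by
          exact Nat.mul_le_mul_left t (Nat.pow_le_pow_left ht _)
      _ = t ^ n := by
          rw [← pow_succ']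
          congr 1
          omega

/-- Fermat class, converse direction: if `t ≥ 2`, `n ≥ 3`, `t^n ≡ t (mod n)`
and `(t, n) ≠ (2, 3)`, then `(t, n, (t^n - t)/n, 1)` is a prefix polymorphism.
Moreover, `(2, 3, 2, 1)` is not a prefix polymorphism. -/
theorem fermat_class_backward :
    (∀ t n : ℕ, 2 ≤ t → 3 ≤ n → t ^ n ≡ t [MOD n] → ¬(t = 2 ∧ n = 3) →
      IsPrefixPolymorphism t n ((t ^ n - t) / n) 1) ∧
    ¬ IsPrefixPolymorphism 2 3 2 1 := by
  constructor
  · intro t n ht hn hmod hne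
    have hnpos : 0 < n := by omega
    have hle : t ≤ t ^ n := Nat.le_self_pow (by omega) t
    have hdvd : n ∣ t ^ n - t := (Nat.modEq_iff_dvd' hle).mp hmod.symm
    set B := (t ^ n - t) / n with hB
    have hBn : B * n = t ^ n - t := Nat.div_mul_cancel hdvd
    have hineq : t * (n + 1) < t ^ n := aux_ineq t n ht hn hne
    have hineq' : t * n + t < t ^ n := by
      rw [Nat.mul_add, Nat.mul_one] at hineq; exact hineq
    have htB : t < B := by
      have h1 : t * n < B * n := by omega
      exact lt_of_mul_lt_mul_right h1 (Nat.zero_le n)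
    refine ⟨by omega, hnpos, by omega, by norm_num, ?_, by simpa using (by omega : 1 ≤ t), by simpa using htB⟩
    rw [pow_one, hBn]
    omega
  · rintro ⟨-, -, -, -, -, -, h⟩
    norm_num at h
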